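/- Let R be a unique factorization domain and q_1, …, q_l nonzero non-unit elements of R. Then the R-module ⊕_{i=1}^{l} R/(q_i) has no non-trivial pseudo-null submodule: every R-submodule N of ⊕_{i=1}^{l} R/(q_i) for which there exist two relatively prime elements a, b ∈ R with a·N = 0 and b·N = 0 is the zero submodule. -/

import Mathlib

open DirectSum

/-- Let `R` be a UFD and `q₁, …, q_l` nonzero non-units of `R`. Then the
`R`-module `⊕ᵢ R/(qᵢ)` has no non-trivial pseudo-null submodule: any submodule annihilated
by two relatively prime elements of `R` is zero. -/
theorem elementary_module_no_pseudoNull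
    (R : Type*) [CommRing R] [IsDomain R] [UniqueFactorizationMonoid R]
    (l : ℕ) (q : Fin l → R) (hq0 : ∀ i, q i ≠ 0) (hqu : ∀ i, ¬ IsUnit (q i)) :
    ∀ N : Submodule R (⨁ i : Fin l, R ⧸ Ideal.span {q i}),
      (∃ a b : R, IsRelPrime a b ∧ (∀ x ∈ N, a • x = 0) ∧ (∀ x ∈ N, b • x = 0)) →
        N = ⊥ := by
  classical
  letI : NormalizationMonoid R := UniqueFactorizationMonoid.normalizationMonoid.toNormalizationMonoid
  letI : GCDMonoid R := UniqueFactorizationMonoid.toGCDMonoid R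
  rintro N ⟨a, b, hab, ha, hb⟩
  rw [Submodule.eq_bot_iff]
  intro x hx
  refine DFinsupp.ext fun i => ?_
  obtain ⟨r, hr⟩ := Ideal.Quotient.mk_surjective (x i)
  have hax : a • x i = 0 := by
    have := ha x hx
    calc a • x i = (a • x) i := (DFinsupp.smul_apply _ _ _).symm
    _ = 0 := by rw [this]; rfl
  have hbx : b • x i = 0 := by
    have := hb x hx
    calc b • x i = (b • x) i := (DFinsupp.smul_apply _ _ _).symm
    _ = 0 := by rw [this]; rfl
  have h1 : q i ∣ a * r := by
    rw [← Ideal.mem_span_singleton, ← Ideal.Quotient.eq_zero_iff_mem, map_mul]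
    rw [← hr] at hax
    rw [← hax]; rfl
  have h2 : q i ∣ b * r := by
    rw [← Ideal.mem_span_singleton, ← Ideal.Quotient.eq_zero_iff_mem, map_mul]
    rw [← hr] at hbx
    rw [← hbx]; rfl
  have hg : q i ∣ gcd a b * r := (dvd_gcd h1 h2).trans (gcd_mul_right' r a b).dvd
  have hu : IsUnit (gcd a b) := hab (gcd_dvd_left a b) (gcd_dvd_right a b)
  have hqr : q i ∣ r := hu.dvd_mul_left.mp hg
  have : x i = 0 := by
    rw [← hr, Ideal.Quotient.eq_zero_iff_mem, Ideal.mem_span_singleton]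
    exact hqr
  simpa using this
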